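/- Fix ℓ ≥ 1. For every partition λ and every i ∈ {0,…,ℓ−1}, the number of addable nodes of λ of content ≡ i (mod ℓ) minus the number of removable nodes of λ of content ≡ i (mod ℓ) equals c_i(λ) − c_{i−1}(λ) + δ, where the index i−1 is taken modulo ℓ and δ = 1 if i = 0 and δ = 0 otherwise. In particular, this difference depends only on core(λ): it is equal for any two partitions with the same ℓ-core. -/

import Mathlib

/-- A partition: a weakly decreasing, eventually zero sequence of naturals;
`part k` is the `(k+1)`-st part `λ_{k+1}`. -/
structure Partition' where
  part : ℕ → ℕ
  antitone : ∀ a b : ℕ, a ≤ b → part b ≤ part a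
  eventually_zero : ∃ N, ∀ n, N ≤ n → part n = 0

namespace Wreath

attribute [local instance] Classical.propDecidable

/-- The conjugate partition: `conj lam a = ᵗλ_a` for `a ≥ 1`. -/
noncomputable def conj (lam : Partition') (a : ℕ) : ℕ :=
  Set.ncard {k : ℕ | a ≤ lam.part k}

/-- The Maya diagram of a partition: value `+1` at `j` iff `j = ᵗλ_a − a` for some `a ≥ 1`. -/
noncomputable def mayaFun (lam : Partition') : ℤ → ℤ := fun j =>
  if ∃ a : ℕ, j = (conj lam (a + 1) : ℤ) - (a + 1 : ℤ) then 1 else -1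

/-- `f : ℤ → ℤ` is a Maya diagram: values `±1`, eventually `-1` to the right (large `j`),
eventually `+1` to the left (small `j`). -/
def IsMayaFun (f : ℤ → ℤ) : Prop :=
  (∀ j, f j = 1 ∨ f j = -1) ∧ (∃ N : ℤ, ∀ j, N ≤ j → f j = -1) ∧
    (∃ N : ℤ, ∀ j, j ≤ N → f j = 1)

/-- The charge `#{j < 0 : f j = −1} − #{j ≥ 0 : f j = 1}`. -/
noncomputable def chargeFun (f : ℤ → ℤ) : ℤ :=
  (Set.ncard {j : ℤ | j < 0 ∧ f j = -1} : ℤ) - (Set.ncard {j : ℤ | 0 ≤ j ∧ f j = 1} : ℤ)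

def emptyPartition : Partition' :=
  ⟨fun _ => 0, fun _ _ _ => le_rfl, ⟨0, fun _ _ => rfl⟩⟩

/-- The partition whose Maya diagram is `f` (junk value if there is none). -/
noncomputable def partitionOfMaya (f : ℤ → ℤ) : Partition' :=
  if h : ∃ lam : Partition', mayaFun lam = f then h.choose else emptyPartition

/-- The charge `c_i(λ)` of the `i`-th quotient Maya diagram `j ↦ m(λ)(i + jℓ)`. -/
noncomputable def chargeQuot (ℓ : ℕ) (lam : Partition') (i : ℤ) : ℤ :=
  chargeFun fun j => mayaFun lam (i + j * (ℓ : ℤ))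

/-- The `i`-th quotient component `λ^i`: the partition whose Maya diagram is
`j ↦ m_i(λ)(j − c_i(λ))`. -/
noncomputable def quotComp (ℓ : ℕ) (lam : Partition') (i : ℤ) : Partition' :=
  partitionOfMaya fun j => mayaFun lam (i + (j - chargeQuot ℓ lam i) * (ℓ : ℤ))

/-- The `ℓ`-core of `λ`: the partition whose Maya diagram has value `−1` at `i + jℓ`
(`0 ≤ i < ℓ`) exactly when `j ≥ −c_i(λ)`. -/
noncomputable def coreOf (ℓ : ℕ) (lam : Partition') : Partition' :=
  partitionOfMaya fun j =>
    if -(chargeQuot ℓ lam (Int.emod j (ℓ : ℤ))) ≤ Int.ediv j (ℓ : ℤ) then -1 else 1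

/-- Membership of the node `x = (a,b)` in the Young diagram of `lam`:
`1 ≤ a`, `1 ≤ b`, `a ≤ λ_b`.  The content of `(a,b)` is `b − a`. -/
def Partition.memYD (lam : Partition') (x : ℤ × ℤ) : Prop :=
  1 ≤ x.1 ∧ 1 ≤ x.2 ∧ x.1 ≤ (lam.part (x.2 - 1).toNat : ℤ)

/-- Containment of Young diagrams. -/
def Sub (lam mu : Partition') : Prop := ∀ x, Partition.memYD lam x → Partition.memYD mu x

/-- Membership in the skew diagram `μ∖λ`. -/
def SkewMem (lam mu : Partition') (x : ℤ × ℤ) : Prop :=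
  Partition.memYD mu x ∧ ¬ Partition.memYD lam x

/-- The number of nodes of `μ∖λ`. -/
noncomputable def skewSize (lam mu : Partition') : ℕ := Set.ncard {x | SkewMem lam mu x}

/-- The size `|λ|`. -/
noncomputable def Partition.size (lam : Partition') : ℕ := Set.ncard {x | Partition.memYD lam x}

/-- Edge-adjacency of nodes. -/
def adjacent (x y : ℤ × ℤ) : Prop :=
  (x.1 = y.1 ∧ (x.2 = y.2 + 1 ∨ y.2 = x.2 + 1)) ∨
  (x.2 = y.2 ∧ (x.1 = y.1 + 1 ∨ y.1 = x.1 + 1))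

/-- `μ∖λ` is a border strip: `λ ⊆ μ`, nonempty, connected through edge-adjacent nodes,
and containing no 2×2 block. -/
def IsBorderStrip (lam mu : Partition') : Prop :=
  Sub lam mu ∧ (∃ x, SkewMem lam mu x) ∧
  (∀ x y, SkewMem lam mu x → SkewMem lam mu y →
    Relation.ReflTransGen (fun u v => SkewMem lam mu u ∧ SkewMem lam mu v ∧ adjacent u v) x y) ∧
  ¬ ∃ a b : ℤ, SkewMem lam mu (a, b) ∧ SkewMem lam mu (a + 1, b) ∧
      SkewMem lam mu (a, b + 1) ∧ SkewMem lam mu (a + 1, b + 1)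

/-- An `ℓ`-core: a partition from which no border strip of `ℓ` nodes can be removed. -/
def IsCore (ℓ : ℕ) (lam : Partition') : Prop :=
  ¬ ∃ mu : Partition', IsBorderStrip mu lam ∧ skewSize mu lam = ℓ

/-- Dominance order (on partitions of the same size): `Dom μ λ` means `μ ⊴ λ`. -/
def Dom (mu lam : Partition') : Prop :=
  Partition.size mu = Partition.size lam ∧
  ∀ k : ℕ, ∑ b ∈ Finset.range k, mu.part b ≤ ∑ b ∈ Finset.range k, lam.part b

/-- `x` is the node of `μ∖λ` of largest content (the initial node of a strip). -/
def IsMaxContentNode (lam mu : Partition') (x : ℤ × ℤ) : Prop :=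
  SkewMem lam mu x ∧ ∀ y, SkewMem lam mu y → y.2 - y.1 ≤ x.2 - x.1

/-- `x` is the node of `μ∖λ` of smallest content (the final node of a strip). -/
def IsMinContentNode (lam mu : Partition') (x : ℤ × ℤ) : Prop :=
  SkewMem lam mu x ∧ ∀ y, SkewMem lam mu y → x.2 - x.1 ≤ y.2 - y.1

/-- Add `1` to each of the first `k` parts (append a column of height `k`). -/
def addColParts (k : ℕ) (f : ℕ → ℕ) : ℕ → ℕ := fun r => if r < k then f r + 1 else f r

/-- The number of (nonzero) rows of a partition. -/
noncomputable def numRows (nu : Partition') : ℕ := Set.ncard {r : ℕ | 0 < nu.part r}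

/-- Append a new final row of length `k` after `len` rows. -/
def addRowParts (k len : ℕ) (f : ℕ → ℕ) : ℕ → ℕ :=
  fun r => if r < len then f r else if r = len then k else 0

/-- One column-addition step: `μ` is obtained from `ν` by adding, in component `i` of the
`ℓ`-quotient, a new column of height `k` no taller than any existing column. -/
def IsColStep (ℓ : ℕ) (nu mu : Partition') (i k : ℕ) : Prop :=
  i < ℓ ∧ 1 ≤ k ∧
  (∀ a : ℕ, 1 ≤ a → (a : ℕ) ≤ (quotComp ℓ nu (i : ℤ)).part 0 →
    k ≤ conj (quotComp ℓ nu (i : ℤ)) a) ∧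
  coreOf ℓ mu = coreOf ℓ nu ∧
  (∀ i' : ℕ, i' < ℓ → i' ≠ i → quotComp ℓ mu (i' : ℤ) = quotComp ℓ nu (i' : ℤ)) ∧
  (quotComp ℓ mu (i : ℤ)).part = addColParts k ((quotComp ℓ nu (i : ℤ)).part)

/-- One row-addition step: `μ` is obtained from `ν` by adding, in component `i` of the
`ℓ`-quotient, a new final row of length `k` no longer than any existing row. -/
def IsRowStep (ℓ : ℕ) (nu mu : Partition') (i k : ℕ) : Prop :=
  i < ℓ ∧ 1 ≤ k ∧
  (∀ r : ℕ, 0 < (quotComp ℓ nu (i : ℤ)).part r → k ≤ (quotComp ℓ nu (i : ℤ)).part r) ∧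
  coreOf ℓ mu = coreOf ℓ nu ∧
  (∀ i' : ℕ, i' < ℓ → i' ≠ i → quotComp ℓ mu (i' : ℤ) = quotComp ℓ nu (i' : ℤ)) ∧
  (quotComp ℓ mu (i : ℤ)).part =
    addRowParts k (numRows (quotComp ℓ nu (i : ℤ))) ((quotComp ℓ nu (i : ℤ)).part)

/-- A column-addition sequence for `λ`. -/
def IsColSeq (ℓ : ℕ) (lam : Partition') (N : ℕ) (seq : ℕ → Partition') : Prop :=
  seq 0 = coreOf ℓ lam ∧ seq N = lam ∧
  ∀ t, t < N → ∃ i k, IsColStep ℓ (seq t) (seq (t + 1)) i k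

/-- A row-addition sequence for `λ`. -/
def IsRowSeq (ℓ : ℕ) (lam : Partition') (N : ℕ) (seq : ℕ → Partition') : Prop :=
  seq 0 = coreOf ℓ lam ∧ seq N = lam ∧
  ∀ t, t < N → ∃ i k, IsRowStep ℓ (seq t) (seq (t + 1)) i k

/-- Left-to-right order on a column-addition sequence: for `1 ≤ r < s ≤ N` the content of the
initial node of the `r`-th strip is strictly greater than the content of the final node of the
`s`-th strip. -/
def LeftToRight (N : ℕ) (seq : ℕ → Partition') : Prop :=
  ∀ r s, 1 ≤ r → r < s → s ≤ N → ∀ x y,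
    IsMaxContentNode (seq (r - 1)) (seq r) x →
    IsMinContentNode (seq (s - 1)) (seq s) y →
    y.2 - y.1 < x.2 - x.1

/-- Right-to-left order on a row-addition sequence: for `1 ≤ r < s ≤ N` the content of the
final node of the `r`-th strip is strictly less than the content of the final node of the
`s`-th strip. -/
def RightToLeft (N : ℕ) (seq : ℕ → Partition') : Prop :=
  ∀ r s, 1 ≤ r → r < s → s ≤ N → ∀ x y,
    IsMinContentNode (seq (r - 1)) (seq r) x →
    IsMinContentNode (seq (s - 1)) (seq s) y →
    x.2 - x.1 < y.2 - y.1

/-- `x` is an addable node of `λ`. -/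
def Addable (lam : Partition') (x : ℤ × ℤ) : Prop :=
  ¬ Partition.memYD lam x ∧
    ∃ mu : Partition', ∀ y, Partition.memYD mu y ↔ (Partition.memYD lam y ∨ y = x)

/-- `x` is a removable node of `λ`. -/
def Removable (lam : Partition') (x : ℤ × ℤ) : Prop :=
  Partition.memYD lam x ∧
    ∃ mu : Partition', ∀ y, Partition.memYD mu y ↔ (Partition.memYD lam y ∧ y ≠ x)

end Wreath

open Wreath

namespace AR
open Wreath
attribute [local instance] Classical.propDecidable

/-- A finite lower set of ℕ is an initial segment of length its cardinality. -/
lemma mem_iff_lt_ncard (S : Set ℕ) (hfin : S.Finite)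
    (hlow : ∀ a b : ℕ, a ≤ b → b ∈ S → a ∈ S) (k : ℕ) : k ∈ S ↔ k < S.ncard := by
  have hne : Sᶜ.Nonempty := by
    rcases Set.Infinite.nonempty (Set.Finite.infinite_compl hfin) with ⟨x, hx⟩
    exact ⟨x, hx⟩
  set n := sInf Sᶜ with hn
  have hnS : n ∈ Sᶜ := Nat.sInf_mem hne
  have hIio : S = Set.Iio n := by
    ext m
    constructor
    · intro hm
      by_contra h
      simp only [Set.mem_Iio] at h
      simp only [Set.mem_Iio, not_lt] at h
      exact hnS (hlow n m h hm)
    · intro hm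
      by_contra h
      exact absurd (Nat.sInf_le h) (not_le.mpr hm)
  rw [hIio, ← Finset.coe_range, Set.ncard_coe_finset, Finset.card_range]
  simp

variable (lam : Partition')

/-- the `k`-th `-1` position of the Maya diagram (to be shown): `k - λ_{k+1}` -/
def epos (k : ℕ) : ℤ := (k : ℤ) - lam.part k

lemma epos_strictMono : StrictMono (epos lam) := by
  apply strictMono_nat_of_lt_succ
  intro k
  have := lam.antitone k (k + 1) (Nat.le_succ k)
  unfold epos
  push_cast
  omega

/-- `ᵗλ_{a+1}` -/
noncomputable def dualP (a : ℕ) : ℕ := conj lam (a + 1)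

lemma lt_dualP_iff (a k : ℕ) : k < dualP lam a ↔ a < lam.part k := by
  have hfin : {k : ℕ | a + 1 ≤ lam.part k}.Finite := by
    obtain ⟨N, hN⟩ := lam.eventually_zero
    apply Set.Finite.subset (Set.finite_Iio N)
    intro x hx
    simp only [Set.mem_setOf_eq] at hx
    by_contra h
    simp only [Set.mem_Iio, not_lt] at h
    rw [hN x h] at hx; omega
  have hlow : ∀ x y : ℕ, x ≤ y → y ∈ {k : ℕ | a + 1 ≤ lam.part k} → x ∈ {k : ℕ | a + 1 ≤ lam.part k} := by
    intro x y hxy hy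
    exact le_trans hy (lam.antitone x y hxy)
  have := (mem_iff_lt_ncard _ hfin hlow k).symm
  simpa [dualP, conj, Set.mem_setOf_eq, Nat.succ_le_iff] using this

lemma dualP_antitone : ∀ a b : ℕ, a ≤ b → dualP lam b ≤ dualP lam a := by
  intro a b hab
  by_contra h
  push_neg at h
  have h1 : dualP lam a < dualP lam b := h
  have := (lt_dualP_iff lam b (dualP lam a)).mp h1
  have h2 := (lt_dualP_iff lam a (dualP lam a)).mpr (by omega)
  omega

lemma dualP_eventually_zero : ∀ a, lam.part 0 ≤ a → dualP lam a = 0 := by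
  intro a ha
  by_contra h
  have h1 : 0 < dualP lam a := Nat.pos_of_ne_zero h
  have := (lt_dualP_iff lam a 0).mp h1
  omega

lemma maya_eq_one_iff (j : ℤ) :
    mayaFun lam j = 1 ↔ ∃ a : ℕ, j = (dualP lam a : ℤ) - (a + 1) := by
  simp only [mayaFun, dualP]
  split
  · next h => exact ⟨fun _ => h, fun _ => rfl⟩
  · next h =>
    constructor
    · intro h1; omega
    · intro h1; exact absurd h1 h

lemma maya_vals (j : ℤ) : mayaFun lam j = 1 ∨ mayaFun lam j = -1 := by
  unfold mayaFun; split <;> simp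

lemma maya_eq_neg_one_iff (j : ℤ) :
    mayaFun lam j = -1 ↔ ∃ k : ℕ, j = epos lam k := by
  constructor
  · intro hm
    by_contra hk
    push_neg at hk
    have hone : mayaFun lam j = 1 := by
      rw [maya_eq_one_iff]
      by_cases h0 : j < epos lam 0
      · refine ⟨(-j - 1).toNat, ?_⟩
        have hp0 : (lam.part 0 : ℤ) ≤ -j - 1 := by
          unfold epos at h0
          push_cast at h0
          omega
        have ha : ((-j - 1).toNat : ℤ) = -j - 1 := by
          have : (0 : ℤ) ≤ lam.part 0 := Int.ofNat_nonneg _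
          omega
        have hz : dualP lam (-j - 1).toNat = 0 := by
          apply dualP_eventually_zero
          omega
        rw [hz, ha]
        ring
      · push_neg at h0
        -- find greatest K with epos K < j
        have h0' : epos lam 0 < j := lt_of_le_of_ne h0 (fun h => hk 0 h.symm)
        have hx : ∃ n : ℕ, j < epos lam n := by
          refine ⟨(j + lam.part 0).toNat + 1, ?_⟩
          unfold epos at h0' ⊢
          have h1 : (lam.part ((j + lam.part 0).toNat + 1) : ℤ) ≤ lam.part 0 := by
            exact_mod_cast lam.antitone 0 _ (Nat.zero_le _)
          push_cast at h0' ⊢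
          omega
        set n0 := Nat.find hx with hn0def
        have hn0 : j < epos lam n0 := Nat.find_spec hx
        have hn0pos : 1 ≤ n0 := by
          by_contra hcon
          push_neg at hcon
          interval_cases n0
          omega
        have hPK' : ¬ (j < epos lam (n0 - 1)) := Nat.find_min hx (by omega)
        push_neg at hPK'
        set K := n0 - 1 with hKdef
        have hsucc : K + 1 = n0 := by omega
        have hPK : epos lam K < j := lt_of_le_of_ne hPK' (fun h => hk K h.symm)
        have hK1 : j < epos lam (K + 1) := by rw [hsucc]; exact hn0
        -- now epos K < j < epos (K+1)
        have e1 : (K : ℤ) - lam.part K < j := hPK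
        have e2 : j < (K : ℤ) + 1 - lam.part (K + 1) := hK1
        have hjK : j ≤ (K : ℤ) := by
          have : (0:ℤ) ≤ lam.part (K+1) := Int.ofNat_nonneg _
          omega
        refine ⟨(K - j).toNat, ?_⟩
        have haz : ((K - j).toNat : ℤ) = (K : ℤ) - j := by omega
        have hd : dualP lam (K - j).toNat = K + 1 := by
          have hub : ¬ (K + 1 < dualP lam (K - j).toNat) := by
            rw [lt_dualP_iff]
            intro hlt
            have : ((K:ℤ) - j) < lam.part (K+1) := by
              rw [← haz]; exact_mod_cast hlt
            omega
          have hlb : K < dualP lam (K - j).toNat := by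
            rw [lt_dualP_iff]
            have : ((K:ℤ) - j) < lam.part K := by omega
            omega
          omega
        rw [hd, haz]
        push_cast
        ring
    omega
  · rintro ⟨k, hk⟩
    rcases maya_vals lam j with h1 | h1
    · exfalso
      rw [maya_eq_one_iff] at h1
      obtain ⟨a, ha⟩ := h1
      -- disjointness
      rcases lt_or_ge a (lam.part k) with hc | hc
      · have := (lt_dualP_iff lam a k).mpr hc
        unfold epos at hk
        omega
      · have : ¬ (k < dualP lam a) := by
          rw [lt_dualP_iff]; omega
        unfold epos at hk
        omega
    · exact h1

lemma maya_right (j : ℤ) (h : (dualP lam 0 : ℤ) ≤ j) : mayaFun lam j = -1 := by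
  rcases maya_vals lam j with h1 | h1
  · exfalso
    rw [maya_eq_one_iff] at h1
    obtain ⟨a, ha⟩ := h1
    have : (dualP lam a : ℤ) ≤ dualP lam 0 := by
      exact_mod_cast dualP_antitone lam 0 a (Nat.zero_le a)
    have : (0:ℤ) ≤ a := Int.ofNat_nonneg a
    omega
  · exact h1

lemma maya_left (j : ℤ) (h : j < -(lam.part 0 : ℤ)) : mayaFun lam j = 1 := by
  rcases maya_vals lam j with h1 | h1
  · exact h1
  · exfalso
    rw [maya_eq_neg_one_iff] at h1
    obtain ⟨k, hk⟩ := h1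
    have h2 : (lam.part k : ℤ) ≤ lam.part 0 := by
      exact_mod_cast lam.antitone 0 k (Nat.zero_le k)
    have : (0:ℤ) ≤ k := Int.ofNat_nonneg k
    unfold epos at hk
    omega

lemma addable_iff (x : ℤ × ℤ) : Addable lam x ↔
    ∃ b : ℕ, x = ((lam.part b : ℤ) + 1, (b : ℤ) + 1) ∧
      (b = 0 ∨ lam.part b < lam.part (b - 1)) := by
  obtain ⟨x1, x2⟩ := x
  constructor
  · rintro ⟨hnm, mu, hmu⟩
    have hx : Partition.memYD mu (x1, x2) := (hmu (x1, x2)).mpr (Or.inr rfl)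
    obtain ⟨h1, h2, h3⟩ := hx
    simp only at h1 h2 h3
    set b := (x2 - 1).toNat with hb
    have hx2 : x2 = (b : ℤ) + 1 := by omega
    have hnotin : ¬ (1 ≤ x1 ∧ 1 ≤ x2 ∧ x1 ≤ (lam.part b : ℤ)) := hnm
    have hgt : (lam.part b : ℤ) < x1 := by
      by_contra hcon
      push_neg at hcon
      exact hnotin ⟨h1, h2, hcon⟩
    have hx1 : x1 = (lam.part b : ℤ) + 1 := by
      rcases lt_or_ge x1 2 with hc | hc
      · omega
      · have hy : Partition.memYD mu (x1 - 1, x2) := ⟨by omega, h2, by simp only; rw [← hb]; omega⟩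
        have := (hmu (x1 - 1, x2)).mp hy
        rcases this with hl | he
        · obtain ⟨_, _, hl3⟩ := hl
          simp only at hl3
          rw [← hb] at hl3
          omega
        · exfalso
          have : x1 - 1 = x1 := congrArg Prod.fst he
          omega
    refine ⟨b, by rw [hx1, hx2], ?_⟩
    rcases Nat.eq_zero_or_pos b with hb0 | hbpos
    · exact Or.inl hb0
    · right
      have hy : Partition.memYD mu (x1, x2 - 1) := by
        refine ⟨h1, by omega, ?_⟩
        simp only
        have : ((x2 - 1 - 1).toNat : ℕ) ≤ b := by omega
        have hmono : mu.part b ≤ mu.part (x2 - 1 - 1).toNat := mu.antitone _ _ this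
        omega
      have := (hmu (x1, x2 - 1)).mp hy
      rcases this with hl | he
      · obtain ⟨_, _, hl3⟩ := hl
        simp only at hl3
        have hbt : (x2 - 1 - 1).toNat = b - 1 := by omega
        rw [hbt] at hl3
        omega
      · exfalso
        have : x2 - 1 = x2 := congrArg Prod.snd he
        omega
  · rintro ⟨b, hx, hcond⟩
    have hx1 : x1 = (lam.part b : ℤ) + 1 := congrArg Prod.fst hx
    have hx2 : x2 = (b : ℤ) + 1 := congrArg Prod.snd hx
    have htn : (x2 - 1).toNat = b := by omega
    constructor
    · rintro ⟨_, _, h3⟩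
      simp only at h3
      rw [htn] at h3
      omega
    · refine ⟨⟨fun r => if r = b then lam.part b + 1 else lam.part r, ?_, ?_⟩, ?_⟩
      · intro a c hac
        have hlc := lam.antitone a c hac
        by_cases ha : a = b <;> by_cases hc : c = b
        · rw [if_pos ha, if_pos hc]
        · rw [if_pos ha, if_neg hc]
          have := lam.antitone b c (by omega)
          omega
        · rw [if_neg ha, if_pos hc]
          rcases hcond with h0 | hlt
          · omega
          · have h1 := lam.antitone a (b-1) (by omega)
            omega
        · rw [if_neg ha, if_neg hc]
          exact hlc
      · obtain ⟨N, hN⟩ := lam.eventually_zero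
        refine ⟨max N (b+1), fun n hn => ?_⟩
        have : n ≠ b := by omega
        rw [if_neg this]
        exact hN n (by omega)
      · rintro ⟨y1, y2⟩
        simp only [Partition.memYD, Prod.mk.injEq]
        by_cases hr : (y2 - 1).toNat = b ∧ 1 ≤ y2
        · obtain ⟨hr1, hr2⟩ := hr
          have hy2 : y2 = (b:ℤ) + 1 := by omega
          rw [hr1, if_pos rfl]
          constructor
          · rintro ⟨g1, g2, g3⟩
            push_cast at g3
            rcases lt_or_ge y1 ((lam.part b : ℤ) + 1) with hc | hc
            · exact Or.inl ⟨g1, g2, by omega⟩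
            · exact Or.inr ⟨by omega, by omega⟩
          · rintro (⟨g1, g2, g3⟩ | ⟨g1, g2⟩)
            · exact ⟨g1, g2, by push_cast; omega⟩
            · exact ⟨by omega, by omega, by push_cast; omega⟩
        · push_neg at hr
          have hne : ¬ (y1 = x1 ∧ y2 = x2) := by
            rintro ⟨e1, e2⟩
            have g1 : (y2 - 1).toNat = b := by rw [e2]; exact htn
            have g2 : 1 ≤ y2 := by rw [e2, hx2]; omega
            have := hr g1
            omega
          by_cases hy2 : 1 ≤ y2
          · have hne2 : (y2-1).toNat ≠ b := fun h => by have := hr h; omega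
            rw [if_neg hne2]
            constructor
            · rintro ⟨g1, g2, g3⟩
              exact Or.inl ⟨g1, g2, g3⟩
            · rintro (⟨g1, g2, g3⟩ | ⟨g1, g2⟩)
              · exact ⟨g1, g2, g3⟩
              · exact absurd ⟨g1, g2⟩ hne
          · constructor
            · rintro ⟨_, g2, _⟩
              exact absurd g2 hy2
            · rintro (⟨_, g2, _⟩ | ⟨g1, g2⟩)
              · exact absurd g2 hy2
              · exact absurd ⟨g1, g2⟩ hne
lemma removable_iff (x : ℤ × ℤ) : Removable lam x ↔
    ∃ b : ℕ, x = ((lam.part b : ℤ), (b : ℤ) + 1) ∧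
      1 ≤ lam.part b ∧ lam.part (b + 1) < lam.part b := by
  obtain ⟨x1, x2⟩ := x
  constructor
  · rintro ⟨hm, mu, hmu⟩
    obtain ⟨h1, h2, h3⟩ := hm
    simp only at h1 h2 h3
    set b := (x2 - 1).toNat with hb
    have hx2 : x2 = (b : ℤ) + 1 := by omega
    have hnself : ¬ Partition.memYD mu (x1, x2) := by
      intro hc
      have := (hmu (x1, x2)).mp hc
      exact this.2 rfl
    have hx1 : x1 = (lam.part b : ℤ) := by
      by_contra hne
      have hlt : x1 < (lam.part b : ℤ) := by omega
      have hy : Partition.memYD mu (x1 + 1, x2) := by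
        apply (hmu (x1 + 1, x2)).mpr
        refine ⟨⟨by omega, h2, by simp only; rw [← hb]; omega⟩, ?_⟩
        intro hc
        have : x1 + 1 = x1 := congrArg Prod.fst hc
        omega
      obtain ⟨g1, g2, g3⟩ := hy
      simp only at g3
      exact hnself ⟨h1, h2, by simp only; omega⟩
    have hpos : 1 ≤ lam.part b := by omega
    refine ⟨b, by rw [hx1, hx2], hpos, ?_⟩
    by_contra hcon
    push_neg at hcon
    have heq : lam.part (b + 1) = lam.part b := le_antisymm (lam.antitone b (b+1) (by omega)) hcon
    have hy : Partition.memYD mu (x1, x2 + 1) := by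
      apply (hmu (x1, x2 + 1)).mpr
      refine ⟨⟨h1, by omega, ?_⟩, ?_⟩
      · simp only
        have htn : (x2 + 1 - 1).toNat = b + 1 := by omega
        rw [htn, heq]
        omega
      · intro hc
        have : x2 + 1 = x2 := congrArg Prod.snd hc
        omega
    obtain ⟨g1, g2, g3⟩ := hy
    simp only at g3
    have htn : (x2 + 1 - 1).toNat = b + 1 := by omega
    rw [htn] at g3
    have hmono : mu.part (b+1) ≤ mu.part b := mu.antitone b (b+1) (by omega)
    exact hnself ⟨h1, h2, by simp only; rw [← hb]; omega⟩
  · rintro ⟨b, hx, hpos, hlt⟩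
    have hx1 : x1 = (lam.part b : ℤ) := congrArg Prod.fst hx
    have hx2 : x2 = (b : ℤ) + 1 := congrArg Prod.snd hx
    have htn : (x2 - 1).toNat = b := by omega
    constructor
    · exact ⟨by omega, by omega, by simp only; rw [htn]; omega⟩
    · refine ⟨⟨fun r => if r = b then lam.part b - 1 else lam.part r, ?_, ?_⟩, ?_⟩
      · intro a c hac
        have hlc := lam.antitone a c hac
        by_cases ha : a = b <;> by_cases hc : c = b
        · rw [if_pos ha, if_pos hc]
        · rw [if_pos ha, if_neg hc]
          have := lam.antitone (b+1) c (by omega)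
          omega
        · rw [if_neg ha, if_pos hc]
          have := lam.antitone a b (by omega)
          omega
        · rw [if_neg ha, if_neg hc]
          exact hlc
      · obtain ⟨N, hN⟩ := lam.eventually_zero
        refine ⟨max N (b+1), fun n hn => ?_⟩
        have : n ≠ b := by omega
        rw [if_neg this]
        exact hN n (by omega)
      · rintro ⟨y1, y2⟩
        simp only [Partition.memYD, Prod.mk.injEq]
        by_cases hy2 : 1 ≤ y2
        · by_cases hr : (y2 - 1).toNat = b
          · have hy2b : y2 = (b:ℤ) + 1 := by omega
            rw [hr, if_pos rfl]
            constructor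
            · rintro ⟨g1, g2, g3⟩
              refine ⟨⟨g1, g2, by omega⟩, fun hc => ?_⟩
              have e1 : y1 = x1 := congrArg Prod.fst hc
              rw [hx1] at e1
              omega
            · rintro ⟨⟨g1, g2, g3⟩, hne⟩
              refine ⟨g1, g2, ?_⟩
              rcases lt_or_ge y1 (lam.part b : ℤ) with hc | hc
              · omega
              · exfalso
                apply hne
                have : y1 = x1 := by omega
                rw [this, hy2b, ← hx2]
          · rw [if_neg hr]
            constructor
            · rintro ⟨g1, g2, g3⟩
              refine ⟨⟨g1, g2, g3⟩, fun hc => ?_⟩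
              have e2 : y2 = x2 := congrArg Prod.snd hc
              rw [e2, hx2] at hr
              omega
            · rintro ⟨⟨g1, g2, g3⟩, _⟩
              exact ⟨g1, g2, g3⟩
        · constructor
          · rintro ⟨_, g2, _⟩
            exact absurd g2 hy2
          · rintro ⟨⟨_, g2, _⟩, _⟩
            exact absurd g2 hy2
lemma epos_mono : Monotone (epos lam) := (epos_strictMono lam).monotone

lemma addable_exists_iff (c : ℤ) :
    (∃ x : ℤ × ℤ, Addable lam x ∧ x.2 - x.1 = c) ↔
      (mayaFun lam c = -1 ∧ mayaFun lam (c-1) = 1) := by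
  constructor
  · rintro ⟨x, hA, rfl⟩
    rw [addable_iff] at hA
    obtain ⟨b, hxb, hcond⟩ := hA
    have hc : x.2 - x.1 = epos lam b := by
      rw [hxb]; unfold epos; push_cast; ring
    constructor
    · rw [maya_eq_neg_one_iff]; exact ⟨b, hc⟩
    · rcases maya_vals lam (x.2 - x.1 - 1) with h1 | h1
      · exact h1
      · exfalso
        rw [maya_eq_neg_one_iff] at h1
        obtain ⟨k, hk⟩ := h1
        rcases hcond with hb0 | hlt
        · subst hb0
          have h2 : (lam.part k : ℤ) ≤ lam.part 0 := by
            exact_mod_cast lam.antitone 0 k (Nat.zero_le k)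
          have h3 : (0:ℤ) ≤ k := Int.ofNat_nonneg k
          unfold epos at hc hk
          push_cast at hc hk
          omega
        · have hb1 : 1 ≤ b := by
            rcases Nat.eq_zero_or_pos b with h | h
            · subst h; simp at hlt
            · exact h
          rcases le_or_gt k (b-1) with hkb | hkb
          · have h2 : epos lam k ≤ epos lam (b-1) := epos_mono lam hkb
            have h3 : epos lam (b-1) = ((b:ℤ) - 1) - lam.part (b-1) := by
              unfold epos; congr 1; omega
            unfold epos at hc hk
            rw [h3] at h2
            unfold epos at h2
            omega
          · have h2 : epos lam b ≤ epos lam k := epos_mono lam (by omega)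
            omega
  · rintro ⟨h1, h2⟩
    rw [maya_eq_neg_one_iff] at h1
    obtain ⟨b, hc⟩ := h1
    have hcond : b = 0 ∨ lam.part b < lam.part (b - 1) := by
      rcases Nat.eq_zero_or_pos b with h | hbpos
      · exact Or.inl h
      · right
        by_contra hcon
        push_neg at hcon
        have hge : lam.part b ≤ lam.part (b-1) := lam.antitone (b-1) b (by omega)
        have heq : lam.part (b-1) = lam.part b := le_antisymm hcon hge
        have he : epos lam (b-1) = c - 1 := by
          unfold epos at hc ⊢
          rw [heq]
          omega
        have hm := (maya_eq_neg_one_iff lam (c-1)).mpr ⟨b-1, he.symm⟩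
        omega
    refine ⟨((lam.part b : ℤ) + 1, (b:ℤ) + 1), ⟨?_, ?_⟩⟩
    · rw [addable_iff]
      exact ⟨b, rfl, hcond⟩
    · simp only
      unfold epos at hc
      omega
lemma removable_exists_iff (c : ℤ) :
    (∃ x : ℤ × ℤ, Removable lam x ∧ x.2 - x.1 = c) ↔
      (mayaFun lam c = 1 ∧ mayaFun lam (c-1) = -1) := by
  constructor
  · rintro ⟨x, hR, rfl⟩
    rw [removable_iff] at hR
    obtain ⟨b, hxb, hpos, hlt⟩ := hR
    have hc : x.2 - x.1 = epos lam b + 1 := by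
      rw [hxb]; unfold epos; push_cast; ring
    constructor
    · rcases maya_vals lam (x.2 - x.1) with h1 | h1
      · exact h1
      · exfalso
        rw [maya_eq_neg_one_iff] at h1
        obtain ⟨k, hk⟩ := h1
        rcases le_or_gt k b with hkb | hkb
        · have h2 : epos lam k ≤ epos lam b := epos_mono lam hkb
          omega
        · have h2 : epos lam (b+1) ≤ epos lam k := epos_mono lam (by omega)
          have h3 : epos lam b + 2 ≤ epos lam (b+1) := by
            unfold epos; push_cast; omega
          omega
    · rw [maya_eq_neg_one_iff]
      exact ⟨b, by omega⟩
  · rintro ⟨h1, h2⟩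
    rw [maya_eq_neg_one_iff] at h2
    obtain ⟨b, hc⟩ := h2
    have hne : epos lam (b+1) ≠ c := by
      intro he
      have := (maya_eq_neg_one_iff lam c).mpr ⟨b+1, he.symm⟩
      omega
    have hgt : epos lam b < epos lam (b+1) := epos_strictMono lam (Nat.lt_succ_self b)
    have h3 : epos lam b + 2 ≤ epos lam (b+1) := by omega
    have hlt : lam.part (b+1) < lam.part b := by
      unfold epos at h3; push_cast at h3; omega
    have hpos : 1 ≤ lam.part b := by omega
    refine ⟨((lam.part b : ℤ), (b:ℤ) + 1), ⟨?_, ?_⟩⟩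
    · rw [removable_iff]
      exact ⟨b, rfl, hpos, hlt⟩
    · simp only
      unfold epos at hc
      omega

lemma addable_content_inj (x y : ℤ × ℤ) (hx : Addable lam x) (hy : Addable lam y)
    (h : x.2 - x.1 = y.2 - y.1) : x = y := by
  rw [addable_iff] at hx hy
  obtain ⟨b, hxb, -⟩ := hx
  obtain ⟨b', hyb, -⟩ := hy
  have h1 : epos lam b = epos lam b' := by
    unfold epos
    rw [hxb, hyb] at h
    push_cast at h ⊢
    omega
  have : b = b' := (epos_strictMono lam).injective h1
  rw [hxb, hyb, this]

lemma removable_content_inj (x y : ℤ × ℤ) (hx : Removable lam x) (hy : Removable lam y)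
    (h : x.2 - x.1 = y.2 - y.1) : x = y := by
  rw [removable_iff] at hx hy
  obtain ⟨b, hxb, -, -⟩ := hx
  obtain ⟨b', hyb, -, -⟩ := hy
  have h1 : epos lam b = epos lam b' := by
    unfold epos
    rw [hxb, hyb] at h
    push_cast at h ⊢
    omega
  have : b = b' := (epos_strictMono lam).injective h1
  rw [hxb, hyb, this]

lemma ncard_transfer (P : ℤ × ℤ → Prop) (C : Set ℤ) (Q : ℤ → Prop)
    (hinj : ∀ x y, P x → P y → x.2 - x.1 = y.2 - y.1 → x = y)
    (hiff : ∀ c, (∃ x, P x ∧ x.2 - x.1 = c) ↔ c ∈ C) :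
    {x : ℤ × ℤ | P x ∧ Q (x.2 - x.1)}.ncard = {c : ℤ | c ∈ C ∧ Q c}.ncard := by
  have himg : (fun x : ℤ × ℤ => x.2 - x.1) '' {x : ℤ × ℤ | P x ∧ Q (x.2 - x.1)}
      = {c : ℤ | c ∈ C ∧ Q c} := by
    ext c
    constructor
    · rintro ⟨x, ⟨hP, hQ⟩, rfl⟩
      exact ⟨(hiff _).mp ⟨x, hP, rfl⟩, hQ⟩
    · rintro ⟨hC, hQ⟩
      obtain ⟨x, hP, hc⟩ := (hiff c).mpr hC
      exact ⟨x, ⟨hP, by rw [hc]; exact hQ⟩, hc⟩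
  rw [← himg]
  symm
  apply Set.ncard_image_of_injOn
  intro x hx y hy hxy
  exact hinj x y hx.1 hy.1 hxy
section Charge

variable (f g : ℤ → ℤ)

lemma chargeFun_window (M : ℕ)
    (hv : ∀ j, f j = 1 ∨ f j = -1)
    (hl : ∀ j : ℤ, j < -(M:ℤ) → f j = 1)
    (hr : ∀ j : ℤ, (M:ℤ) ≤ j → f j = -1) :
    chargeFun f = (((Finset.Ico (-(M:ℤ)) (M:ℤ)).filter (fun j => f j = -1)).card : ℤ) - M := by
  unfold chargeFun
  have h1 : {j : ℤ | j < 0 ∧ f j = -1}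
      = ↑((Finset.Ico (-(M:ℤ)) 0).filter (fun j => f j = -1)) := by
    ext j
    simp only [Set.mem_setOf_eq, Finset.coe_filter, Finset.mem_Ico]
    constructor
    · rintro ⟨h, hf⟩
      refine ⟨⟨?_, h⟩, hf⟩
      by_contra hc
      push_neg at hc
      have := hl j (by omega)
      omega
    · rintro ⟨⟨_, h⟩, hf⟩
      exact ⟨h, hf⟩
  have h2 : {j : ℤ | 0 ≤ j ∧ f j = 1}
      = ↑((Finset.Ico (0:ℤ) (M:ℤ)).filter (fun j => f j = 1)) := by
    ext j
    simp only [Set.mem_setOf_eq, Finset.coe_filter, Finset.mem_Ico]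
    constructor
    · rintro ⟨h, hf⟩
      refine ⟨⟨h, ?_⟩, hf⟩
      by_contra hc
      push_neg at hc
      have := hr j (by omega)
      omega
    · rintro ⟨⟨h, _⟩, hf⟩
      exact ⟨h, hf⟩
  rw [h1, h2, Set.ncard_coe_finset, Set.ncard_coe_finset]
  have hcompl : ((Finset.Ico (0:ℤ) (M:ℤ)).filter (fun j => f j = 1)).card
      + ((Finset.Ico (0:ℤ) (M:ℤ)).filter (fun j => f j = -1)).card
      = (Finset.Ico (0:ℤ) (M:ℤ)).card := by
    have hbase := Finset.card_filter_add_card_filter_not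
      (s := Finset.Ico (0:ℤ) (M:ℤ)) (p := fun j => f j = 1)
    have heq : (Finset.Ico (0:ℤ) (M:ℤ)).filter (fun j => ¬ f j = 1)
        = (Finset.Ico (0:ℤ) (M:ℤ)).filter (fun j => f j = -1) := by
      apply Finset.filter_congr
      intro j _
      constructor
      · intro h
        rcases hv j with h1 | h1
        · exact absurd h1 h
        · exact h1
      · intro h hc
        omega
    rw [heq] at hbase
    exact hbase
  have hsplit : Finset.Ico (-(M:ℤ)) (M:ℤ) = Finset.Ico (-(M:ℤ)) 0 ∪ Finset.Ico (0:ℤ) (M:ℤ) := by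
    rw [Finset.Ico_union_Ico_eq_Ico (by omega) (by omega)]
  have hdisj : Disjoint ((Finset.Ico (-(M:ℤ)) 0).filter (fun j => f j = -1))
      ((Finset.Ico (0:ℤ) (M:ℤ)).filter (fun j => f j = -1)) := by
    apply Finset.disjoint_filter_filter
    exact Finset.Ico_disjoint_Ico_consecutive _ _ _
  have hcard : ((Finset.Ico (-(M:ℤ)) (M:ℤ)).filter (fun j => f j = -1)).card
      = ((Finset.Ico (-(M:ℤ)) 0).filter (fun j => f j = -1)).card
      + ((Finset.Ico (0:ℤ) (M:ℤ)).filter (fun j => f j = -1)).card := by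
    rw [hsplit, Finset.filter_union, Finset.card_union_of_disjoint hdisj]
  have hIco : (Finset.Ico (0:ℤ) (M:ℤ)).card = M := by
    rw [Int.card_Ico]
    omega
  rw [hcard]
  push_cast
  omega

lemma tele (M : ℕ)
    (hvf : ∀ j, f j = 1 ∨ f j = -1) (hvg : ∀ j, g j = 1 ∨ g j = -1)
    (hlf : ∀ j : ℤ, j < -(M:ℤ) → f j = 1) (hlg : ∀ j : ℤ, j < -(M:ℤ) → g j = 1)
    (hrf : ∀ j : ℤ, (M:ℤ) ≤ j → f j = -1) (hrg : ∀ j : ℤ, (M:ℤ) ≤ j → g j = -1) :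
    ({j : ℤ | f j = -1 ∧ g j = 1}.ncard : ℤ) - ({j : ℤ | f j = 1 ∧ g j = -1}.ncard : ℤ)
      = chargeFun f - chargeFun g := by
  rw [chargeFun_window f M hvf hlf hrf, chargeFun_window g M hvg hlg hrg]
  set I := Finset.Ico (-(M:ℤ)) (M:ℤ) with hI
  have hmemI : ∀ j : ℤ, f j = -1 ∧ g j = 1 → j ∈ I := by
    intro j ⟨h1, h2⟩
    rw [hI, Finset.mem_Ico]
    constructor
    · by_contra hc; push_neg at hc; have := hlf j (by omega); omega
    · by_contra hc; push_neg at hc; have := hrg j (by omega); omega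
  have hmemI' : ∀ j : ℤ, f j = 1 ∧ g j = -1 → j ∈ I := by
    intro j ⟨h1, h2⟩
    rw [hI, Finset.mem_Ico]
    constructor
    · by_contra hc; push_neg at hc; have := hlg j (by omega); omega
    · by_contra hc; push_neg at hc; have := hrf j (by omega); omega
  have e1 : {j : ℤ | f j = -1 ∧ g j = 1} = ↑(I.filter (fun j => f j = -1 ∧ g j = 1)) := by
    ext j
    simp only [Set.mem_setOf_eq, Finset.coe_filter]
    exact ⟨fun h => ⟨hmemI j h, h⟩, fun h => h.2⟩
  have e2 : {j : ℤ | f j = 1 ∧ g j = -1} = ↑(I.filter (fun j => f j = 1 ∧ g j = -1)) := by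
    ext j
    simp only [Set.mem_setOf_eq, Finset.coe_filter]
    exact ⟨fun h => ⟨hmemI' j h, h⟩, fun h => h.2⟩
  rw [e1, e2, Set.ncard_coe_finset, Set.ncard_coe_finset]
  set F := I.filter (fun j => f j = -1) with hF
  set G := I.filter (fun j => g j = -1) with hG
  have eP : I.filter (fun j => f j = -1 ∧ g j = 1) = F \ G := by
    ext j
    simp only [hF, hG, Finset.mem_sdiff, Finset.mem_filter]
    constructor
    · rintro ⟨hj, h1, h2⟩
      exact ⟨⟨hj, h1⟩, fun hc => by omega⟩
    · rintro ⟨⟨hj, h1⟩, hc⟩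
      refine ⟨hj, h1, ?_⟩
      have := hvg j
      by_cases hgj : g j = -1
      · exact absurd ⟨hj, hgj⟩ hc
      · omega
  have eQ : I.filter (fun j => f j = 1 ∧ g j = -1) = G \ F := by
    ext j
    simp only [hF, hG, Finset.mem_sdiff, Finset.mem_filter]
    constructor
    · rintro ⟨hj, h1, h2⟩
      exact ⟨⟨hj, h2⟩, fun hc => by omega⟩
    · rintro ⟨⟨hj, h2⟩, hc⟩
      refine ⟨hj, ?_, h2⟩
      have := hvf j
      by_cases hfj : f j = -1
      · exact absurd ⟨hj, hfj⟩ hc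
      · omega
  rw [eP, eQ]
  have c1 : (F \ G).card + (F ∩ G).card = F.card := Finset.card_sdiff_add_card_inter F G
  have c2 : (G \ F).card + (G ∩ F).card = G.card := Finset.card_sdiff_add_card_inter G F
  have c3 : (F ∩ G).card = (G ∩ F).card := by rw [Finset.inter_comm]
  push_cast
  omega

lemma chargeFun_shift (M : ℕ)
    (hv : ∀ j, f j = 1 ∨ f j = -1)
    (hl : ∀ j : ℤ, j < -(M:ℤ) → f j = 1)
    (hr : ∀ j : ℤ, (M:ℤ) ≤ j → f j = -1) :
    chargeFun (fun j => f (j - 1)) = chargeFun f - 1 := by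
  rw [chargeFun_window f M hv hl hr,
    chargeFun_window (fun j => f (j - 1)) (M + 1) (fun j => hv _)
      (fun j hj => hl _ (by push_cast at hj ⊢; omega))
      (fun j hj => hr _ (by push_cast at hj ⊢; omega))]
  have himg : ((Finset.Ico (-((M+1:ℕ):ℤ)) ((M+1:ℕ):ℤ)).filter (fun j => f (j - 1) = -1)).image (fun a => a - 1)
      = (Finset.Ico (-(M:ℤ)) (M:ℤ)).filter (fun j => f j = -1) := by
    ext b
    simp only [Finset.mem_image, Finset.mem_filter, Finset.mem_Ico]
    constructor
    · rintro ⟨a, ⟨⟨h1, h2⟩, h3⟩, rfl⟩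
      refine ⟨⟨?_, by push_cast at h2 ⊢; omega⟩, h3⟩
      by_contra hc
      push_neg at hc
      have := hl (a - 1) (by omega)
      omega
    · rintro ⟨⟨h1, h2⟩, h3⟩
      exact ⟨b + 1, ⟨⟨by push_cast; omega, by push_cast; omega⟩, by simpa using h3⟩, by ring⟩
  have hcard : ((Finset.Ico (-((M+1:ℕ):ℤ)) ((M+1:ℕ):ℤ)).filter (fun j => f (j - 1) = -1)).card
      = ((Finset.Ico (-(M:ℤ)) (M:ℤ)).filter (fun j => f j = -1)).card := by
    rw [← himg]
    exact (Finset.card_image_of_injective _ (fun a b h => by omega)).symm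
  rw [hcard]
  push_cast
  omega

end Charge
lemma ncard_residue (ℓ : ℕ) (hℓ : 1 ≤ ℓ) (i : ℤ) (hi0 : 0 ≤ i) (hiℓ : i < ℓ) (C : ℤ → Prop) :
    {c : ℤ | C c ∧ Int.emod c (ℓ:ℤ) = i}.ncard = {j : ℤ | C (i + j * ℓ)}.ncard := by
  have himg : (fun j : ℤ => i + j * ℓ) '' {j : ℤ | C (i + j * ℓ)}
      = {c : ℤ | C c ∧ Int.emod c (ℓ:ℤ) = i} := by
    ext c
    simp only [Set.mem_image, Set.mem_setOf_eq]
    constructor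
    · rintro ⟨j, hj, rfl⟩
      refine ⟨hj, ?_⟩
      show (i + j * (ℓ:ℤ)) % (ℓ:ℤ) = i
      rw [Int.add_mul_emod_self_right]
      exact Int.emod_eq_of_lt hi0 hiℓ
    · rintro ⟨hC, hmod⟩
      have hmod' : c % (ℓ:ℤ) = i := hmod
      have hdd := Int.emod_add_mul_ediv c (ℓ:ℤ)
      rw [hmod'] at hdd
      refine ⟨c / (ℓ:ℤ), ?_, ?_⟩
      · have hc : i + c / (ℓ:ℤ) * (ℓ:ℤ) = c := by linarith
        rw [hc]
        exact hC
      · linarith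
  rw [← himg]
  apply Set.ncard_image_of_injOn
  intro a _ b _ hab
  simp only at hab
  have hℓ' : (0:ℤ) < ℓ := by exact_mod_cast hℓ
  have : a * (ℓ:ℤ) = b * ℓ := by omega
  exact mul_right_cancel₀ (by omega) this

lemma quot_window (ℓ : ℕ) (hℓ : 1 ≤ ℓ) (i' : ℤ) (h1 : -1 ≤ i') (h2 : i' < ℓ) :
    (∀ j : ℤ, ((dualP lam 0 + lam.part 0 + 1 : ℕ):ℤ) ≤ j → mayaFun lam (i' + j * ℓ) = -1) ∧
    (∀ j : ℤ, j < -((dualP lam 0 + lam.part 0 + 1 : ℕ):ℤ) → mayaFun lam (i' + j * ℓ) = 1) := by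
    set M : ℕ := dualP lam 0 + lam.part 0 + 1 with hM
    have hℓ' : (1:ℤ) ≤ ℓ := by exact_mod_cast hℓ
    constructor
    · intro j hj
      apply maya_right
      have hj0 : (0:ℤ) ≤ j := by
        have : (0:ℤ) ≤ M := by positivity
        omega
      have : j ≤ j * ℓ := le_mul_of_one_le_right hj0 hℓ'
      have hMe : (dualP lam 0 : ℤ) + 1 ≤ M := by
        rw [hM]; push_cast; omega
      omega
    · intro j hj
      apply maya_left
      have hj1 : j + 1 ≤ 0 := by
        have : (0:ℤ) ≤ M := by positivity
        omega
      have hmul : (j + 1) * ℓ ≤ (j + 1) := by nlinarith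
      have hMe : (lam.part 0 : ℤ) + 1 ≤ M := by
        rw [hM]; push_cast; omega
      have : i' + j * ℓ = (j + 1) * ℓ - ℓ + i' := by ring
      omega

lemma main1 (ℓ : ℕ) (hℓ : 1 ≤ ℓ) (i : ℤ) (hi0 : 0 ≤ i) (hi : i < ℓ) :
    ({x : ℤ × ℤ | Addable lam x ∧ Int.emod (x.2 - x.1) (ℓ:ℤ) = i}.ncard : ℤ)
      - ({x : ℤ × ℤ | Removable lam x ∧ Int.emod (x.2 - x.1) (ℓ:ℤ) = i}.ncard : ℤ)
      = chargeFun (fun j => mayaFun lam (i + j * (ℓ:ℤ)))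
        - chargeFun (fun j => mayaFun lam ((i - 1) + j * (ℓ:ℤ))) := by
  set f : ℤ → ℤ := fun j => mayaFun lam (i + j * (ℓ:ℤ)) with hf
  set g : ℤ → ℤ := fun j => mayaFun lam ((i - 1) + j * (ℓ:ℤ)) with hg
  -- counting transfer
  have hA : {x : ℤ × ℤ | Addable lam x ∧ Int.emod (x.2 - x.1) (ℓ:ℤ) = i}.ncard
      = {j : ℤ | f j = -1 ∧ g j = 1}.ncard := by
    rw [ncard_transfer (Addable lam) {c : ℤ | mayaFun lam c = -1 ∧ mayaFun lam (c-1) = 1}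
      (fun c => Int.emod c (ℓ:ℤ) = i) (addable_content_inj lam) (addable_exists_iff lam)]
    rw [ncard_residue ℓ hℓ i hi0 hi]
    congr 1
    ext j
    simp only [Set.mem_setOf_eq, hf, hg]
    rw [show i + j * (ℓ:ℤ) - 1 = (i - 1) + j * (ℓ:ℤ) by ring]
  have hR : {x : ℤ × ℤ | Removable lam x ∧ Int.emod (x.2 - x.1) (ℓ:ℤ) = i}.ncard
      = {j : ℤ | f j = 1 ∧ g j = -1}.ncard := by
    rw [ncard_transfer (Removable lam) {c : ℤ | mayaFun lam c = 1 ∧ mayaFun lam (c-1) = -1}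
      (fun c => Int.emod c (ℓ:ℤ) = i) (removable_content_inj lam) (removable_exists_iff lam)]
    rw [ncard_residue ℓ hℓ i hi0 hi]
    congr 1
    ext j
    simp only [Set.mem_setOf_eq, hf, hg]
    rw [show i + j * (ℓ:ℤ) - 1 = (i - 1) + j * (ℓ:ℤ) by ring]
  rw [hA, hR]
  set M : ℕ := dualP lam 0 + lam.part 0 + 1 with hM
  have hwin := fun i' h1 h2 => quot_window lam ℓ hℓ i' h1 h2
  obtain ⟨hfr, hfl⟩ := hwin i (by omega) hi
  obtain ⟨hgr, hgl⟩ := hwin (i - 1) (by omega) (by omega)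
  exact tele f g M (fun j => maya_vals lam _) (fun j => maya_vals lam _)
    (fun j hj => hfl j hj) (fun j hj => hgl j hj)
    (fun j hj => hfr j hj) (fun j hj => hgr j hj)
lemma part1_final (ℓ : ℕ) (hℓ : 1 ≤ ℓ) (i : ℕ) (hi : i < ℓ) :
    (Set.ncard {x : ℤ × ℤ | Addable lam x ∧ Int.emod (x.2 - x.1) (ℓ : ℤ) = (i : ℤ)} : ℤ) -
      (Set.ncard {x : ℤ × ℤ | Removable lam x ∧ Int.emod (x.2 - x.1) (ℓ : ℤ) = (i : ℤ)} : ℤ) =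
    chargeQuot ℓ lam (i : ℤ) -
      chargeQuot ℓ lam ((if i = 0 then ℓ - 1 else i - 1 : ℕ) : ℤ) +
      (if i = 0 then 1 else 0) := by
  have hm := main1 lam ℓ hℓ (i:ℤ) (Int.ofNat_nonneg i) (by exact_mod_cast hi)
  rw [hm]
  have hcf : chargeFun (fun j => mayaFun lam ((i:ℤ) + j * (ℓ:ℤ))) = chargeQuot ℓ lam (i:ℤ) := rfl
  rw [hcf]
  by_cases h0 : i = 0
  · subst h0
    rw [if_pos rfl, if_pos rfl]
    set M : ℕ := dualP lam 0 + lam.part 0 + 1 with hM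
    obtain ⟨hhr, hhl⟩ := quot_window lam ℓ hℓ (((ℓ - 1 : ℕ):ℤ)) (by push_cast; omega)
      (by push_cast; omega)
    have hsh := chargeFun_shift (fun j => mayaFun lam (((ℓ - 1 : ℕ):ℤ) + j * (ℓ:ℤ))) M
      (fun j => maya_vals lam _) hhl hhr
    have hgh : (fun j : ℤ => mayaFun lam ((((0:ℕ):ℤ) - 1) + j * (ℓ:ℤ)))
        = fun j : ℤ => mayaFun lam (((ℓ - 1 : ℕ):ℤ) + (j - 1) * (ℓ:ℤ)) := by
      funext j
      congr 1
      have : ((ℓ - 1 : ℕ):ℤ) = (ℓ:ℤ) - 1 := by push_cast; omega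
      rw [this]
      push_cast
      ring
    rw [hgh]
    have hsh2 : chargeFun (fun j : ℤ => mayaFun lam (((ℓ - 1 : ℕ):ℤ) + (j - 1) * (ℓ:ℤ)))
        = chargeQuot ℓ lam (((ℓ - 1 : ℕ)):ℤ) - 1 := hsh
    rw [hsh2]
    ring
  · rw [if_neg h0, if_neg h0]
    have hcast : ((i - 1 : ℕ):ℤ) = (i:ℤ) - 1 := by push_cast; omega
    have : chargeQuot ℓ lam (((i - 1 : ℕ)):ℤ)
        = chargeFun (fun j => mayaFun lam (((i:ℤ) - 1) + j * (ℓ:ℤ))) := by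
      unfold chargeQuot
      rw [hcast]
    rw [this]
    ring
lemma dpos_lt (a b : ℕ) (h : a < b) :
    (dualP lam b : ℤ) - (b + 1) < (dualP lam a : ℤ) - (a + 1) := by
  have := dualP_antitone lam a b (le_of_lt h)
  push_cast
  omega

lemma chargeFun_maya_zero : chargeFun (mayaFun lam) = 0 := by
  unfold chargeFun
  have h1 : {j : ℤ | j < 0 ∧ mayaFun lam j = -1} = epos lam '' {k : ℕ | k < lam.part k} := by
    ext j
    simp only [Set.mem_setOf_eq, Set.mem_image]
    constructor
    · rintro ⟨hj, hm⟩
      rw [maya_eq_neg_one_iff] at hm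
      obtain ⟨k, hk⟩ := hm
      refine ⟨k, ?_, hk.symm⟩
      unfold epos at hk
      omega
    · rintro ⟨k, hk, rfl⟩
      refine ⟨by unfold epos; omega, ?_⟩
      rw [maya_eq_neg_one_iff]
      exact ⟨k, rfl⟩
  have h2 : {j : ℤ | 0 ≤ j ∧ mayaFun lam j = 1}
      = (fun a : ℕ => (dualP lam a : ℤ) - (a + 1)) '' {a : ℕ | a < lam.part a} := by
    ext j
    simp only [Set.mem_setOf_eq, Set.mem_image]
    constructor
    · rintro ⟨hj, hm⟩
      rw [maya_eq_one_iff] at hm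
      obtain ⟨a, ha⟩ := hm
      refine ⟨a, ?_, ha.symm⟩
      rw [← lt_dualP_iff]
      omega
    · rintro ⟨a, ha, rfl⟩
      rw [← lt_dualP_iff] at ha
      refine ⟨by omega, ?_⟩
      rw [maya_eq_one_iff]
      exact ⟨a, rfl⟩
  rw [h1, h2, Set.ncard_image_of_injOn (Set.injOn_of_injective (epos_strictMono lam).injective),
    Set.ncard_image_of_injOn (Set.injOn_of_injective ?_)]
  · omega
  · intro a b hab
    have hab' : (dualP lam a : ℤ) - (a + 1) = (dualP lam b : ℤ) - (b + 1) := hab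
    by_contra hne
    rcases Nat.lt_or_ge a b with h | h
    · have := dpos_lt lam a b h
      omega
    · have h' : b < a := by omega
      have := dpos_lt lam b a h'
      omega

lemma charge_stair (c : ℤ) : chargeFun (fun j => if -c ≤ j then (-1:ℤ) else 1) = c := by
  unfold chargeFun
  have h1 : {j : ℤ | j < 0 ∧ (if -c ≤ j then (-1:ℤ) else 1) = -1} = ↑(Finset.Ico (-c) 0) := by
    ext j
    simp only [Set.mem_setOf_eq, Finset.coe_Ico, Set.mem_Ico]
    by_cases h : -c ≤ j
    · rw [if_pos h]
      exact ⟨fun ⟨hj, _⟩ => ⟨h, hj⟩, fun ⟨_, hj⟩ => ⟨hj, rfl⟩⟩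
    · rw [if_neg h]
      exact ⟨fun ⟨_, he⟩ => by omega, fun ⟨h1, _⟩ => absurd h1 h⟩
  have h2 : {j : ℤ | 0 ≤ j ∧ (if -c ≤ j then (-1:ℤ) else 1) = 1} = ↑(Finset.Ico (0:ℤ) (-c)) := by
    ext j
    simp only [Set.mem_setOf_eq, Finset.coe_Ico, Set.mem_Ico]
    by_cases h : -c ≤ j
    · rw [if_pos h]
      exact ⟨fun ⟨_, he⟩ => by omega, fun ⟨_, hj⟩ => by omega⟩
    · rw [if_neg h]
      exact ⟨fun ⟨hj, _⟩ => ⟨hj, by omega⟩, fun ⟨hj, _⟩ => ⟨hj, rfl⟩⟩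
  rw [h1, h2, Set.ncard_coe_finset, Set.ncard_coe_finset, Int.card_Ico, Int.card_Ico]
  omega

lemma charge_split (F : ℤ → ℤ) (ℓ : ℕ) (hℓ : 1 ≤ ℓ) (M : ℕ)
    (hv : ∀ j, F j = 1 ∨ F j = -1)
    (hl : ∀ j : ℤ, j < -(M:ℤ) → F j = 1)
    (hr : ∀ j : ℤ, (M:ℤ) ≤ j → F j = -1) :
    chargeFun F = ∑ i ∈ Finset.range ℓ, chargeFun (fun j => F ((i:ℤ) + j * ℓ)) := by
  have hℓ' : (1:ℤ) ≤ ℓ := by exact_mod_cast hℓ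
  have hql : ∀ i : ℕ, i < ℓ → ∀ j : ℤ, j < -(M:ℤ) → F ((i:ℤ) + j * ℓ) = 1 := by
    intro i hi j hj
    apply hl
    have hj1 : j + 1 ≤ 0 := by
      have : (0:ℤ) ≤ M := Int.ofNat_nonneg M
      omega
    have hmul : (j + 1) * ℓ ≤ j + 1 := by nlinarith
    have hile : (i:ℤ) ≤ (ℓ:ℤ) - 1 := by
      have : (i:ℤ) < ℓ := by exact_mod_cast hi
      omega
    have : (i:ℤ) + j * ℓ = (j + 1) * ℓ - ℓ + i := by ring
    omega
  have hqr : ∀ i : ℕ, i < ℓ → ∀ j : ℤ, (M:ℤ) ≤ j → F ((i:ℤ) + j * ℓ) = -1 := by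
    intro i hi j hj
    apply hr
    have hj0 : (0:ℤ) ≤ j := by
      have : (0:ℤ) ≤ M := Int.ofNat_nonneg M
      omega
    have : j ≤ j * ℓ := le_mul_of_one_le_right hj0 hℓ'
    have : (0:ℤ) ≤ i := Int.ofNat_nonneg i
    omega
  have hbigl : ∀ j : ℤ, j < -((M * ℓ : ℕ):ℤ) → F j = 1 := by
    intro j hj
    apply hl
    have : (M:ℤ) ≤ (M:ℤ) * ℓ := le_mul_of_one_le_right (Int.ofNat_nonneg M) hℓ'
    push_cast at hj
    omega
  have hbigr : ∀ j : ℤ, ((M * ℓ : ℕ):ℤ) ≤ j → F j = -1 := by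
    intro j hj
    apply hr
    have : (M:ℤ) ≤ (M:ℤ) * ℓ := le_mul_of_one_le_right (Int.ofNat_nonneg M) hℓ'
    push_cast at hj
    omega
  rw [chargeFun_window F (M * ℓ) hv hbigl hbigr]
  have hsum : ∀ i ∈ Finset.range ℓ, chargeFun (fun j => F ((i:ℤ) + j * ℓ))
      = (((Finset.Ico (-(M:ℤ)) (M:ℤ)).filter (fun j => F ((i:ℤ) + j * ℓ) = -1)).card : ℤ) - M := by
    intro i hi
    rw [Finset.mem_range] at hi
    exact chargeFun_window _ M (fun j => hv _) (hql i hi) (hqr i hi)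
  rw [Finset.sum_congr rfl hsum, Finset.sum_sub_distrib, Finset.sum_const, Finset.card_range]
  have key : ((Finset.Ico (-((M * ℓ : ℕ):ℤ)) ((M * ℓ : ℕ):ℤ)).filter (fun c => F c = -1)).card
      = ∑ i ∈ Finset.range ℓ,
        ((Finset.Ico (-(M:ℤ)) (M:ℤ)).filter (fun j => F ((i:ℤ) + j * ℓ) = -1)).card := by
    set T : ℕ → Finset ℤ := fun i =>
      ((Finset.Ico (-(M:ℤ)) (M:ℤ)).filter (fun j => F ((i:ℤ) + j * ℓ) = -1)).image
        (fun j => (i:ℤ) + j * ℓ) with hT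
    have hres : ∀ i : ℕ, i < ℓ → ∀ c ∈ T i, c % (ℓ:ℤ) = i := by
      intro i hi c hc
      rw [hT] at hc
      simp only [Finset.mem_image, Finset.mem_filter, Finset.mem_Ico] at hc
      obtain ⟨j, _, rfl⟩ := hc
      rw [Int.add_mul_emod_self_right]
      exact Int.emod_eq_of_lt (Int.ofNat_nonneg i) (by exact_mod_cast hi)
    have hdisj : ∀ x ∈ Finset.range ℓ, ∀ y ∈ Finset.range ℓ, x ≠ y → Disjoint (T x) (T y) := by
      intro x hx y hy hxy
      rw [Finset.mem_range] at hx hy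
      rw [Finset.disjoint_left]
      intro c hcx hcy
      have h1 := hres x hx c hcx
      have h2 := hres y hy c hcy
      have : (x:ℤ) = y := by omega
      exact hxy (by exact_mod_cast this)
    have hbig : (Finset.Ico (-((M * ℓ : ℕ):ℤ)) ((M * ℓ : ℕ):ℤ)).filter (fun c => F c = -1)
        = (Finset.range ℓ).biUnion T := by
      ext c
      simp only [Finset.mem_filter, Finset.mem_Ico, Finset.mem_biUnion, Finset.mem_range, hT,
        Finset.mem_image]
      constructor
      · rintro ⟨⟨hlo, hhi⟩, hF⟩
        have hℓ0 : (ℓ:ℤ) ≠ 0 := by omega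
        have hr0 : 0 ≤ c % (ℓ:ℤ) := Int.emod_nonneg c hℓ0
        have hrl : c % (ℓ:ℤ) < ℓ := Int.emod_lt_of_pos c (by omega)
        have hqd : (ℓ:ℤ) * (c / ℓ) + c % ℓ = c := Int.mul_ediv_add_emod c ℓ
        have hqd' : (c / (ℓ:ℤ)) * ℓ + c % ℓ = c := by rw [mul_comm] at hqd; exact hqd
        push_cast at hlo hhi
        have hq1 : -(M:ℤ) ≤ c / ℓ := by
          by_contra hcon
          push_neg at hcon
          have h5 : c / (ℓ:ℤ) ≤ -(M:ℤ) - 1 := by omega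
          have h6 : (ℓ:ℤ) * (c / ℓ) ≤ (ℓ:ℤ) * (-(M:ℤ) - 1) :=
            mul_le_mul_of_nonneg_left h5 (by omega)
          nlinarith
        have hq2 : c / (ℓ:ℤ) < M := by
          by_contra hcon
          push_neg at hcon
          have h6 : (ℓ:ℤ) * (M:ℤ) ≤ (ℓ:ℤ) * (c / ℓ) :=
            mul_le_mul_of_nonneg_left hcon (by omega)
          nlinarith
        refine ⟨(c % (ℓ:ℤ)).toNat, by omega, c / ℓ, ⟨⟨hq1, hq2⟩, ?_⟩, ?_⟩
        · rw [show ((((c % (ℓ:ℤ)).toNat) : ℤ) + (c / ℓ) * ℓ) = c by omega]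
          exact hF
        · omega
      · rintro ⟨i, hi, j, ⟨⟨hj1, hj2⟩, hF⟩, rfl⟩
        have hi' : (i:ℤ) < ℓ := by exact_mod_cast hi
        have hi0 : (0:ℤ) ≤ i := Int.ofNat_nonneg i
        have hjl : -(M:ℤ) * ℓ ≤ j * ℓ := mul_le_mul_of_nonneg_right hj1 (by omega)
        have hju : j * (ℓ:ℤ) ≤ ((M:ℤ) - 1) * ℓ := mul_le_mul_of_nonneg_right (by omega) (by omega)
        refine ⟨⟨?_, ?_⟩, hF⟩
        · push_cast
          nlinarith
        · push_cast
          nlinarith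
    rw [hbig, Finset.card_biUnion hdisj]
    apply Finset.sum_congr rfl
    intro i _
    rw [hT]
    apply Finset.card_image_of_injective
    intro a b hab
    simp only at hab
    have : a * (ℓ:ℤ) = b * ℓ := by omega
    exact mul_right_cancel₀ (by omega) this
  have key' : (((Finset.Ico (-((M * ℓ : ℕ):ℤ)) ((M * ℓ : ℕ):ℤ)).filter (fun c => F c = -1)).card : ℤ)
      = ∑ i ∈ Finset.range ℓ,
        (((Finset.Ico (-(M:ℤ)) (M:ℤ)).filter (fun j => F ((i:ℤ) + j * ℓ) = -1)).card : ℤ) := by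
    exact_mod_cast key
  rw [key', nsmul_eq_mul]
  push_cast
  ring
noncomputable def Fc (lam : Partition') (ℓ : ℕ) : ℤ → ℤ := fun j =>
  if -(chargeQuot ℓ lam (Int.emod j (ℓ : ℤ))) ≤ Int.ediv j (ℓ : ℤ) then -1 else 1

lemma Fc_vals (ℓ : ℕ) : ∀ j, Fc lam ℓ j = 1 ∨ Fc lam ℓ j = -1 := by
  intro j
  unfold Fc
  split <;> simp

noncomputable def Cb (lam : Partition') (ℓ : ℕ) : ℕ :=
  (Finset.Ico (0:ℤ) (ℓ:ℤ)).sup fun i => (chargeQuot ℓ lam i).natAbs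

lemma Cb_spec (ℓ : ℕ) (i : ℤ) (h0 : 0 ≤ i) (h1 : i < (ℓ:ℤ)) :
    (chargeQuot ℓ lam i).natAbs ≤ Cb lam ℓ := by
  unfold Cb
  exact Finset.le_sup (f := fun i => (chargeQuot ℓ lam i).natAbs) (Finset.mem_Ico.mpr ⟨h0, h1⟩)

lemma Fc_right (ℓ : ℕ) (hℓ : 1 ≤ ℓ) :
    ∀ j : ℤ, ((((Cb lam ℓ) + 1) * ℓ : ℕ):ℤ) ≤ j → Fc lam ℓ j = -1 := by
  intro j hj
  unfold Fc
  have hℓ0 : (0:ℤ) < ℓ := by exact_mod_cast hℓ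
  have hr0 : 0 ≤ j % (ℓ:ℤ) := Int.emod_nonneg j (by omega)
  have hrl : j % (ℓ:ℤ) < ℓ := Int.emod_lt_of_pos j hℓ0
  have hb := Cb_spec lam ℓ (j % (ℓ:ℤ)) hr0 hrl
  have hq : ((Cb lam ℓ : ℤ) + 1) ≤ j / (ℓ:ℤ) := by
    rw [Int.le_ediv_iff_mul_le hℓ0]
    push_cast at hj ⊢
    omega
  rw [if_pos]
  have habs : (chargeQuot ℓ lam (j % (ℓ:ℤ))).natAbs ≤ Cb lam ℓ := hb
  show -(chargeQuot ℓ lam (j % (ℓ:ℤ))) ≤ j / (ℓ:ℤ)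
  omega

lemma Fc_left (ℓ : ℕ) (hℓ : 1 ≤ ℓ) :
    ∀ j : ℤ, j < -((((Cb lam ℓ) + 1) * ℓ : ℕ):ℤ) → Fc lam ℓ j = 1 := by
  intro j hj
  unfold Fc
  have hℓ0 : (0:ℤ) < ℓ := by exact_mod_cast hℓ
  have hr0 : 0 ≤ j % (ℓ:ℤ) := Int.emod_nonneg j (by omega)
  have hrl : j % (ℓ:ℤ) < ℓ := Int.emod_lt_of_pos j hℓ0
  have hb := Cb_spec lam ℓ (j % (ℓ:ℤ)) hr0 hrl
  have hq : j / (ℓ:ℤ) < -(Cb lam ℓ : ℤ) := by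
    rw [Int.ediv_lt_iff_lt_mul hℓ0]
    push_cast at hj ⊢
    nlinarith
  rw [if_neg]
  show ¬ (-(chargeQuot ℓ lam (j % (ℓ:ℤ))) ≤ j / (ℓ:ℤ))
  omega

lemma Fc_quot (ℓ : ℕ) (hℓ : 1 ≤ ℓ) (i : ℕ) (hi : i < ℓ) :
    (fun j : ℤ => Fc lam ℓ ((i:ℤ) + j * ℓ))
      = fun j : ℤ => if -(chargeQuot ℓ lam (i:ℤ)) ≤ j then (-1:ℤ) else 1 := by
  funext j
  unfold Fc
  have hℓ0 : (0:ℤ) < ℓ := by exact_mod_cast hℓ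
  have hmod : Int.emod ((i:ℤ) + j * ℓ) (ℓ:ℤ) = i := by
    show ((i:ℤ) + j * ℓ) % (ℓ:ℤ) = i
    rw [Int.add_mul_emod_self_right]
    exact Int.emod_eq_of_lt (Int.ofNat_nonneg i) (by exact_mod_cast hi)
  have hdiv : Int.ediv ((i:ℤ) + j * ℓ) (ℓ:ℤ) = j := by
    show ((i:ℤ) + j * ℓ) / (ℓ:ℤ) = j
    rw [Int.add_mul_ediv_right _ _ (by omega : (ℓ:ℤ) ≠ 0),
      Int.ediv_eq_zero_of_lt (Int.ofNat_nonneg i) (by exact_mod_cast hi)]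
    ring
  rw [hmod, hdiv]

lemma charge_Fc_zero (ℓ : ℕ) (hℓ : 1 ≤ ℓ) : chargeFun (Fc lam ℓ) = 0 := by
  rw [charge_split (Fc lam ℓ) ℓ hℓ (((Cb lam ℓ) + 1) * ℓ) (Fc_vals lam ℓ)
    (Fc_left lam ℓ hℓ) (Fc_right lam ℓ hℓ)]
  have hmsplit := charge_split (mayaFun lam) ℓ hℓ (dualP lam 0 + lam.part 0 + 1)
    (maya_vals lam)
    (fun j hj => maya_left lam j (by push_cast at hj; omega))
    (fun j hj => maya_right lam j (by push_cast at hj; omega))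
  rw [chargeFun_maya_zero lam] at hmsplit
  have he : ∀ i ∈ Finset.range ℓ, chargeFun (fun j => Fc lam ℓ ((i:ℤ) + j * ℓ))
      = chargeFun (fun j => mayaFun lam ((i:ℤ) + j * ℓ)) := by
    intro i hi
    rw [Finset.mem_range] at hi
    rw [Fc_quot lam ℓ hℓ i hi, charge_stair]
    rfl
  rw [Finset.sum_congr rfl he, ← hmsplit]
noncomputable def enum (Q : Set ℤ) : ℕ → ℤ
  | 0 => sInf Q
  | (k+1) => sInf (Q ∩ Set.Ioi (enum Q k))

lemma finIio (Q : Set ℤ) (L : ℤ) (hL : ∀ j ∈ Q, L ≤ j) : ∀ x : ℤ, (Q ∩ Set.Iio x).Finite := by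
  intro x
  apply Set.Finite.subset (Set.finite_Icc L (x - 1))
  rintro y ⟨hy, hy2⟩
  simp only [Set.mem_Iio] at hy2
  exact Set.mem_Icc.mpr ⟨hL y hy, by omega⟩

section Enum

variable (Q : Set ℤ) (B L : ℤ)
variable (hB0 : 0 ≤ B) (hBQ : ∀ j : ℤ, B ≤ j → j ∈ Q) (hLQ : ∀ j ∈ Q, L ≤ j)

include hBQ hLQ

lemma enum_mem : ∀ k, enum Q k ∈ Q := by
  intro k
  cases k with
  | zero =>
    show sInf Q ∈ Q
    exact Int.csInf_mem ⟨B, hBQ B le_rfl⟩ ⟨L, fun x hx => hLQ x hx⟩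
  | succ k =>
    show sInf (Q ∩ Set.Ioi (enum Q k)) ∈ Q
    have hne : (Q ∩ Set.Ioi (enum Q k)).Nonempty := by
      refine ⟨max B (enum Q k + 1), hBQ _ (le_max_left _ _), ?_⟩
      simp only [Set.mem_Ioi]
      have := le_max_right B (enum Q k + 1)
      omega
    have hbdd : BddBelow (Q ∩ Set.Ioi (enum Q k)) := ⟨L, fun x hx => hLQ x hx.1⟩
    exact (Int.csInf_mem hne hbdd).1

lemma enum_lt_succ : ∀ k, enum Q k < enum Q (k+1) := by
  intro k
  have hne : (Q ∩ Set.Ioi (enum Q k)).Nonempty := by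
    refine ⟨max B (enum Q k + 1), hBQ _ (le_max_left _ _), ?_⟩
    simp only [Set.mem_Ioi]
    have := le_max_right B (enum Q k + 1)
    omega
  have hbdd : BddBelow (Q ∩ Set.Ioi (enum Q k)) := ⟨L, fun x hx => hLQ x hx.1⟩
  exact (Int.csInf_mem hne hbdd).2

lemma enum_zero_le : ∀ x ∈ Q, enum Q 0 ≤ x := by
  intro x hx
  exact csInf_le ⟨L, fun y hy => hLQ y hy⟩ hx

lemma enum_succ_le : ∀ k, ∀ x ∈ Q, enum Q k < x → enum Q (k+1) ≤ x := by
  intro k x hx hlt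
  exact csInf_le ⟨L, fun y hy => hLQ y hy.1⟩ ⟨hx, hlt⟩

lemma enum_le_add : ∀ m d : ℕ, enum Q m + d ≤ enum Q (m + d) := by
  intro m d
  induction d with
  | zero => simp
  | succ d ih =>
    have := enum_lt_succ Q B L hBQ hLQ (m + d)
    push_cast
    have h2 : m + (d + 1) = (m + d) + 1 := by omega
    rw [h2]
    push_cast at ih
    omega

lemma enum_count : ∀ k, (Q ∩ Set.Iio (enum Q k)).ncard = k := by
  intro k
  induction k with
  | zero =>
    have : Q ∩ Set.Iio (enum Q 0) = ∅ := by
      ext x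
      simp only [Set.mem_inter_iff, Set.mem_Iio, Set.mem_empty_iff_false, iff_false, not_and]
      intro hx
      have := enum_zero_le Q B L hBQ hLQ x hx
      omega
    rw [this, Set.ncard_empty]
  | succ k ih =>
    have hins : Q ∩ Set.Iio (enum Q (k+1)) = insert (enum Q k) (Q ∩ Set.Iio (enum Q k)) := by
      ext x
      simp only [Set.mem_inter_iff, Set.mem_Iio, Set.mem_insert_iff]
      constructor
      · rintro ⟨hx, hlt⟩
        rcases lt_trichotomy x (enum Q k) with h | h | h
        · exact Or.inr ⟨hx, h⟩
        · exact Or.inl h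
        · exfalso
          have := enum_succ_le Q B L hBQ hLQ k x hx h
          omega
      · rintro (rfl | ⟨hx, hlt⟩)
        · exact ⟨enum_mem Q B L hBQ hLQ k, enum_lt_succ Q B L hBQ hLQ k⟩
        · exact ⟨hx, by have := enum_lt_succ Q B L hBQ hLQ k; omega⟩
    rw [hins, Set.ncard_insert_of_notMem (by simp) (finIio Q L hLQ _), ih]

lemma enum_inv : ∀ n : ℕ, ∀ x ∈ Q, (Q ∩ Set.Iio x).ncard = n → enum Q n = x := by
  intro n
  induction n with
  | zero =>
    intro x hx hcount
    have hemp : Q ∩ Set.Iio x = ∅ := (Set.ncard_eq_zero (finIio Q L hLQ x)).mp hcount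
    have h1 := enum_zero_le Q B L hBQ hLQ x hx
    rcases eq_or_lt_of_le h1 with h | h
    · exact h
    · exfalso
      have : enum Q 0 ∈ Q ∩ Set.Iio x := ⟨enum_mem Q B L hBQ hLQ 0, h⟩
      rw [hemp] at this
      exact this
  | succ n ih =>
    intro x hx hcount
    have hfin := finIio Q L hLQ x
    have hne : (Q ∩ Set.Iio x).Nonempty := by
      rw [Set.nonempty_iff_ne_empty]
      intro hemp
      rw [hemp, Set.ncard_empty] at hcount
      omega
    set y := hfin.toFinset.max' (by rwa [Set.Finite.toFinset_nonempty]) with hy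
    have hymem : y ∈ Q ∩ Set.Iio x := by
      rw [← Set.Finite.mem_toFinset hfin]
      exact hfin.toFinset.max'_mem _
    have hymax : ∀ z ∈ Q ∩ Set.Iio x, z ≤ y := by
      intro z hz
      apply Finset.le_max'
      rwa [Set.Finite.mem_toFinset]
    have hins : Q ∩ Set.Iio x = insert y (Q ∩ Set.Iio y) := by
      ext z
      simp only [Set.mem_inter_iff, Set.mem_Iio, Set.mem_insert_iff]
      constructor
      · rintro ⟨hz, hzx⟩
        rcases eq_or_lt_of_le (hymax z ⟨hz, hzx⟩) with h | h
        · exact Or.inl h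
        · exact Or.inr ⟨hz, h⟩
      · rintro (rfl | ⟨hz, hzy⟩)
        · exact hymem
        · have := hymem.2
          simp only [Set.mem_Iio] at this
          exact ⟨hz, by omega⟩
    have hycount : (Q ∩ Set.Iio y).ncard = n := by
      have := hcount
      rw [hins, Set.ncard_insert_of_notMem (by simp) (finIio Q L hLQ _)] at this
      omega
    have hyenum : enum Q n = y := ih y hymem.1 hycount
    show sInf (Q ∩ Set.Ioi (enum Q n)) = x
    rw [hyenum]
    have hyx : y < x := by
      have := hymem.2
      simpa using this
    apply le_antisymm
    · exact csInf_le ⟨L, fun z hz => hLQ z hz.1⟩ ⟨hx, hyx⟩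
    · have hmem := Int.csInf_mem (s := Q ∩ Set.Ioi y)
        ⟨max B (y + 1), hBQ _ (le_max_left _ _), by
          simp only [Set.mem_Ioi]; have := le_max_right B (y + 1); omega⟩
        ⟨L, fun z hz => hLQ z hz.1⟩
      by_contra hcon
      push_neg at hcon
      have h1 : sInf (Q ∩ Set.Ioi y) ∈ Q ∩ Set.Iio x := ⟨hmem.1, hcon⟩
      have h2 := hymax _ h1
      have h3 := hmem.2
      simp only [Set.mem_Ioi] at h3
      omega

end Enum
lemma enum_bound (Q : Set ℤ) (B L : ℤ) (hB0 : 0 ≤ B)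
    (hBQ : ∀ j : ℤ, B ≤ j → j ∈ Q) (hLQ : ∀ j ∈ Q, L ≤ j)
    (hbal : {j : ℤ | j < 0 ∧ j ∈ Q}.ncard = {j : ℤ | 0 ≤ j ∧ j ∉ Q}.ncard) :
    ∃ T : ℕ, (∀ k : ℕ, enum Q k ≤ (k:ℤ)) ∧ (∀ k : ℕ, T ≤ k → enum Q k = k) := by
  classical
  set T := (Q ∩ Set.Iio B).ncard with hT
  have hTB : (T:ℤ) = B := by
    set t := Finset.Ico (0:ℤ) B with ht
    have hA1 : {j : ℤ | j < 0 ∧ j ∈ Q} = Q ∩ Set.Iio 0 := by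
      ext z
      simp only [Set.mem_setOf_eq, Set.mem_inter_iff, Set.mem_Iio]
      tauto
    have hA2 : {j : ℤ | 0 ≤ j ∧ j ∉ Q} = ↑(t.filter (· ∉ Q)) := by
      ext z
      simp only [Set.mem_setOf_eq, Finset.coe_filter, ht, Finset.mem_Ico]
      constructor
      · rintro ⟨hz, hzq⟩
        refine ⟨⟨hz, ?_⟩, hzq⟩
        by_contra hc
        exact hzq (hBQ z (by omega))
      · rintro ⟨⟨hz, _⟩, hzq⟩
        exact ⟨hz, hzq⟩
    have hsplit : Q ∩ Set.Iio B = (Q ∩ Set.Iio 0) ∪ ↑(t.filter (· ∈ Q)) := by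
      ext z
      simp only [Set.mem_inter_iff, Set.mem_Iio, Set.mem_union, Finset.coe_filter, ht,
        Finset.mem_Ico]
      constructor
      · rintro ⟨hz, hzB⟩
        rcases lt_or_ge z 0 with h | h
        · exact Or.inl ⟨hz, h⟩
        · exact Or.inr ⟨⟨h, hzB⟩, hz⟩
      · rintro (⟨hz, h⟩ | ⟨⟨h0, hB⟩, hz⟩)
        · exact ⟨hz, by omega⟩
        · exact ⟨hz, hB⟩
    have hdisj : Disjoint (Q ∩ Set.Iio 0) (↑(t.filter (· ∈ Q)) : Set ℤ) := by
      rw [Set.disjoint_left]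
      rintro z ⟨_, hz⟩ hz2
      simp only [Finset.coe_filter, ht, Finset.mem_Ico, Set.mem_setOf_eq] at hz2
      simp only [Set.mem_Iio] at hz
      omega
    have hUn : T = (Q ∩ Set.Iio 0).ncard + (↑(t.filter (· ∈ Q)) : Set ℤ).ncard := by
      rw [hT, hsplit]
      exact Set.ncard_union_eq hdisj (finIio Q L hLQ 0) (Finset.finite_toSet _)
    have hbal' : (Q ∩ Set.Iio 0).ncard = (t.filter (· ∉ Q)).card := by
      rw [← hA1, hbal, hA2, Set.ncard_coe_finset]
    have hsum : (t.filter (· ∈ Q)).card + (t.filter (· ∉ Q)).card = t.card := by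
      exact Finset.card_filter_add_card_filter_not (p := (· ∈ Q))
    have htcard : t.card = B.toNat := by
      rw [ht, Int.card_Ico]
      omega
    rw [hUn, hbal', Set.ncard_coe_finset]
    omega
  have hcnt : ∀ d : ℕ, (Q ∩ Set.Iio (B + d)).ncard = T + d := by
    intro d
    induction d with
    | zero => simpa using hT.symm
    | succ d ih =>
      have hins : Q ∩ Set.Iio (B + (d + 1 : ℕ)) = insert (B + d) (Q ∩ Set.Iio (B + d)) := by
        ext z
        simp only [Set.mem_inter_iff, Set.mem_Iio, Set.mem_insert_iff]
        constructor
        · rintro ⟨hz, hlt⟩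
          push_cast at hlt
          rcases eq_or_lt_of_le (by omega : z ≤ B + (d:ℤ)) with h | h
          · exact Or.inl h
          · exact Or.inr ⟨hz, h⟩
        · rintro (rfl | ⟨hz, hlt⟩)
          · exact ⟨hBQ _ (by omega), by push_cast; omega⟩
          · exact ⟨hz, by push_cast; omega⟩
      rw [hins, Set.ncard_insert_of_notMem (by simp) (finIio Q L hLQ _), ih]
      omega
  have heq : ∀ k : ℕ, T ≤ k → enum Q k = k := by
    intro k hk
    have h1 := enum_inv Q B L hBQ hLQ k (B + ((k - T : ℕ):ℤ)) (hBQ _ (by omega))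
      (by rw [hcnt (k - T)]; omega)
    rw [h1]
    push_cast
    omega
  refine ⟨T, ?_, heq⟩
  intro k
  rcases le_or_gt T k with h | h
  · rw [heq k h]
  · have h1 := enum_le_add Q B L hBQ hLQ k (T - k)
    have h2 : k + (T - k) = T := by omega
    rw [h2, heq T le_rfl] at h1
    push_cast at h1
    omega

lemma exists_partition_of_Q (Q : Set ℤ) (B L : ℤ) (hB0 : 0 ≤ B)
    (hBQ : ∀ j : ℤ, B ≤ j → j ∈ Q) (hLQ : ∀ j ∈ Q, L ≤ j)
    (hbal : {j : ℤ | j < 0 ∧ j ∈ Q}.ncard = {j : ℤ | 0 ≤ j ∧ j ∉ Q}.ncard) :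
    ∃ kappa : Partition', ∀ j : ℤ, (mayaFun kappa j = -1 ↔ j ∈ Q) := by
  obtain ⟨T, hle, heqT⟩ := enum_bound Q B L hB0 hBQ hLQ hbal
  set pf : ℕ → ℕ := fun k => ((k:ℤ) - enum Q k).toNat with hpf
  have hanti : ∀ a b : ℕ, a ≤ b → pf b ≤ pf a := by
    intro a b hab
    have h1 := enum_le_add Q B L hBQ hLQ a (b - a)
    have h2 : a + (b - a) = b := by omega
    rw [h2] at h1
    have h3 := hle a
    have h4 := hle b
    rw [hpf]
    simp only
    omega
  have hev : ∀ n : ℕ, T ≤ n → pf n = 0 := by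
    intro n hn
    rw [hpf]
    simp only
    rw [heqT n hn]
    simp
  refine ⟨⟨pf, hanti, ⟨T, hev⟩⟩, ?_⟩
  set kappa : Partition' := ⟨pf, hanti, ⟨T, hev⟩⟩ with hkappa
  have hpart : ∀ k : ℕ, (kappa.part k : ℤ) = (k:ℤ) - enum Q k := by
    intro k
    show ((pf k : ℕ) : ℤ) = _
    rw [hpf]
    simp only
    have := hle k
    omega
  have hepos : ∀ k : ℕ, epos kappa k = enum Q k := by
    intro k
    unfold epos
    rw [hpart k]
    ring
  intro j
  rw [maya_eq_neg_one_iff]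
  constructor
  · rintro ⟨k, hk⟩
    rw [hepos k] at hk
    rw [hk]
    exact enum_mem Q B L hBQ hLQ k
  · intro hj
    refine ⟨(Q ∩ Set.Iio j).ncard, ?_⟩
    rw [hepos]
    exact (enum_inv Q B L hBQ hLQ _ j hj rfl).symm
lemma maya_core (ℓ : ℕ) (hℓ : 1 ≤ ℓ) : mayaFun (coreOf ℓ lam) = Fc lam ℓ := by
  have hex : ∃ kappa : Partition', mayaFun kappa = Fc lam ℓ := by
    set Q : Set ℤ := {j : ℤ | Fc lam ℓ j = -1} with hQ
    set B : ℤ := ((((Cb lam ℓ) + 1) * ℓ : ℕ) : ℤ) with hB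
    have hB0 : 0 ≤ B := Int.ofNat_nonneg _
    have hBQ : ∀ j : ℤ, B ≤ j → j ∈ Q := fun j hj => Fc_right lam ℓ hℓ j hj
    have hLQ : ∀ j ∈ Q, -B ≤ j := by
      intro j hj
      by_contra hc
      push_neg at hc
      have := Fc_left lam ℓ hℓ j (by omega)
      have hj' : Fc lam ℓ j = -1 := hj
      omega
    have hbal : {j : ℤ | j < 0 ∧ j ∈ Q}.ncard = {j : ℤ | 0 ≤ j ∧ j ∉ Q}.ncard := by
      have hz := charge_Fc_zero lam ℓ hℓ
      unfold chargeFun at hz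
      have e1 : {j : ℤ | j < 0 ∧ j ∈ Q} = {j : ℤ | j < 0 ∧ Fc lam ℓ j = -1} := rfl
      have e2 : {j : ℤ | 0 ≤ j ∧ j ∉ Q} = {j : ℤ | 0 ≤ j ∧ Fc lam ℓ j = 1} := by
        ext j
        simp only [Set.mem_setOf_eq, hQ]
        constructor
        · rintro ⟨hj, hf⟩
          rcases Fc_vals lam ℓ j with h | h
          · exact ⟨hj, h⟩
          · exact absurd h hf
        · rintro ⟨hj, hf⟩
          exact ⟨hj, by omega⟩
      rw [e1, e2]
      omega
    obtain ⟨kappa, hk⟩ := exists_partition_of_Q Q B (-B) hB0 hBQ hLQ hbal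
    refine ⟨kappa, ?_⟩
    funext j
    have hkj := hk j
    rcases maya_vals kappa j with h1 | h1 <;> rcases Fc_vals lam ℓ j with h2 | h2
    · omega
    · have hmem : j ∈ Q := h2
      have := hkj.mpr hmem
      omega
    · have hmem : j ∈ Q := hkj.mp h1
      have hf : Fc lam ℓ j = -1 := hmem
      omega
    · omega
  have hcore : coreOf ℓ lam = partitionOfMaya (Fc lam ℓ) := rfl
  rw [hcore]
  unfold partitionOfMaya
  rw [dif_pos hex]
  exact hex.choose_spec

lemma chargeQuot_eq_of_core (mu : Partition') (ℓ : ℕ) (hℓ : 1 ≤ ℓ)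
    (h : coreOf ℓ lam = coreOf ℓ mu) (i : ℕ) (hi : i < ℓ) :
    chargeQuot ℓ lam (i:ℤ) = chargeQuot ℓ mu (i:ℤ) := by
  have hF : Fc lam ℓ = Fc mu ℓ := by
    rw [← maya_core lam ℓ hℓ, ← maya_core mu ℓ hℓ, h]
  have h1 : (fun j : ℤ => if -(chargeQuot ℓ lam (i:ℤ)) ≤ j then (-1:ℤ) else 1)
      = (fun j : ℤ => if -(chargeQuot ℓ mu (i:ℤ)) ≤ j then (-1:ℤ) else 1) := by
    rw [← Fc_quot lam ℓ hℓ i hi, ← Fc_quot mu ℓ hℓ i hi, hF]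
  have h2 := congrFun h1 (-(chargeQuot ℓ lam (i:ℤ)) - 1)
  have h3 := congrFun h1 (-(chargeQuot ℓ mu (i:ℤ)) - 1)
  split_ifs at h2 h3 <;> omega

end AR

theorem addable_minus_removable (ℓ : ℕ) (hℓ : 1 ≤ ℓ) :
    (∀ (lam : Partition') (i : ℕ), i < ℓ →
      (Set.ncard {x | Addable lam x ∧ Int.emod (x.2 - x.1) (ℓ : ℤ) = (i : ℤ)} : ℤ) -
        (Set.ncard {x | Removable lam x ∧ Int.emod (x.2 - x.1) (ℓ : ℤ) = (i : ℤ)} : ℤ) =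
      chargeQuot ℓ lam (i : ℤ) -
        chargeQuot ℓ lam ((if i = 0 then ℓ - 1 else i - 1 : ℕ) : ℤ) +
        (if i = 0 then 1 else 0)) ∧
    (∀ lam mu : Partition', coreOf ℓ lam = coreOf ℓ mu → ∀ i : ℕ, i < ℓ →
      (Set.ncard {x | Addable lam x ∧ Int.emod (x.2 - x.1) (ℓ : ℤ) = (i : ℤ)} : ℤ) -
        (Set.ncard {x | Removable lam x ∧ Int.emod (x.2 - x.1) (ℓ : ℤ) = (i : ℤ)} : ℤ) =
      (Set.ncard {x | Addable mu x ∧ Int.emod (x.2 - x.1) (ℓ : ℤ) = (i : ℤ)} : ℤ) -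
        (Set.ncard {x | Removable mu x ∧ Int.emod (x.2 - x.1) (ℓ : ℤ) = (i : ℤ)} : ℤ)) := by
  
  constructor
  · intro lam i hi
    exact AR.part1_final lam ℓ hℓ i hi
  · intro lam mu hcore i hi
    rw [AR.part1_final lam ℓ hℓ i hi, AR.part1_final mu ℓ hℓ i hi]
    have h1 := AR.chargeQuot_eq_of_core lam mu ℓ hℓ hcore i hi
    have hi'lt : (if i = 0 then ℓ - 1 else i - 1) < ℓ := by split <;> omega
    have h2 := AR.chargeQuot_eq_of_core lam mu ℓ hℓ hcore _ hi'lt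
    rw [h1, h2]
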